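/- arXiv:1703.07903 — 2 statements merged into one kernel-verified Lean document; each statement's English description precedes it below -/
import Mathlib

section
/- Let (X_{m,k})_{m≥1,k∈Z} be a triangular array of integrable real random variables such that: for each m the row (X_{m,k})_{k∈Z} is strictly stationary with mean 0; for each fixed k the family (X_{m,k})_{m≥1} is uniformly integrable; and the finite-dimensional distributions of (X_{m,k})_k converge, as m → ∞, to those of (X_k)_k, where (X_k)_{k∈Z} is a stationary ergodic sequence of integrable random variables. Then (1/N) Σ_{k=1}^{N} X_{m,k} converges to 0 in L¹ as min(N,m) → ∞. -/
open MeasureTheory ProbabilityTheory Filter Topology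

noncomputable section

open Finset


private lemma Lp_coeFn_sum {α : Type*} [MeasurableSpace α] {ν : Measure α}
    {ι : Type*} (s : Finset ι) (g : ι → Lp ℝ 2 ν) :
    ((∑ i ∈ s, g i : Lp ℝ 2 ν) : α → ℝ) =ᵐ[ν] fun x => ∑ i ∈ s, (g i : α → ℝ) x := by
  classical
  induction s using Finset.induction_on with
  | empty => simp only [Finset.sum_empty]; exact MeasureTheory.Lp.coeFn_zero ℝ 2 ν
  | @insert a s ha ih =>
    rw [Finset.sum_insert ha]
    refine (MeasureTheory.Lp.coeFn_add _ _).trans ?_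
    filter_upwards [ih] with x hx
    simp only [Pi.add_apply, hx, Finset.sum_insert ha]

set_option maxHeartbeats 2000000 in
set_option synthInstance.maxHeartbeats 1000000 in
private lemma meanErgodicL1 {α : Type*} [MeasurableSpace α] {ν : Measure α}
    [IsProbabilityMeasure ν] {T : α → α} (hT : Ergodic T ν) {f : α → ℝ} (hfm : Measurable f)
    {c : ℝ} (hfb : ∀ x, |f x| ≤ c) :
    Tendsto (fun N : ℕ => ∫ x, |(N:ℝ)⁻¹ * ∑ j ∈ Finset.range N, f (T^[j] x) - ∫ y, f y ∂ν| ∂ν)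
      atTop (𝓝 0) := by
  have hmp : MeasurePreserving T ν ν := hT.toMeasurePreserving
  have hmem : MemLp f 2 ν :=
    MemLp.of_bound hfm.aestronglyMeasurable c
      (Filter.Eventually.of_forall fun x => by simpa [Real.norm_eq_abs] using hfb x)
  set F : Lp ℝ 2 ν := hmem.toLp f with hF
  set U : Lp ℝ 2 ν →L[ℝ] Lp ℝ 2 ν :=
    (Lp.compMeasurePreservingₗᵢ ℝ T hmp (p := 2)).toContinuousLinearMap with hU
  have hUnorm : ‖U‖ ≤ 1 := LinearIsometry.norm_toContinuousLinearMap_le _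
  -- iterates of U
  have hiter : ∀ (G : Lp ℝ 2 ν) (n : ℕ), (U^[n] G : α → ℝ) =ᵐ[ν] fun x => G (T^[n] x) := by
    intro G n
    induction n with
    | zero => simp [Function.iterate_zero]
    | succ n ih =>
      rw [Function.iterate_succ_apply']
      have h1 : (U (U^[n] G) : α → ℝ) =ᵐ[ν] (U^[n] G : α → ℝ) ∘ T :=
        Lp.coeFn_compMeasurePreserving _ hmp
      refine h1.trans ((hmp.quasiMeasurePreserving.ae_eq ih).trans ?_)
      exact Filter.Eventually.of_forall fun x => by
        simp [Function.comp, Function.iterate_succ_apply]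
  -- coeFn of birkhoff average
  have hba : ∀ n : ℕ, ((birkhoffAverage ℝ U _root_.id n F : Lp ℝ 2 ν) : α → ℝ)
      =ᵐ[ν] fun x => (n:ℝ)⁻¹ * ∑ j ∈ Finset.range n, f (T^[j] x) := by
    intro n
    have h1 : ((birkhoffAverage ℝ U _root_.id n F : Lp ℝ 2 ν) : α → ℝ)
        =ᵐ[ν] fun x => (n:ℝ)⁻¹ • (∑ j ∈ Finset.range n, U^[j] F : Lp ℝ 2 ν) x := by
      unfold birkhoffAverage birkhoffSum
      exact Lp.coeFn_smul _ _
    have h2 : ((∑ j ∈ Finset.range n, U^[j] F : Lp ℝ 2 ν) : α → ℝ)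
        =ᵐ[ν] fun x => ∑ j ∈ Finset.range n, (U^[j] F : α → ℝ) x :=
      Lp_coeFn_sum _ _
    have h3 : ∀ᵐ x ∂ν, ∀ j : ℕ, (U^[j] F : α → ℝ) x = f (T^[j] x) := by
      rw [ae_all_iff]
      intro j
      refine (hiter F j).trans ?_
      exact (hmp.iterate j).quasiMeasurePreserving.ae_eq hmem.coeFn_toLp
    filter_upwards [h1, h2, h3] with x hx1 hx2 hx3
    rw [hx1, hx2]
    simp only [smul_eq_mul]
    congr 1
    exact Finset.sum_congr rfl fun j _ => hx3 j
  -- L1 norm bounded by L2 norm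
  have hL1 : ∀ h : Lp ℝ 2 ν, ∫ x, |(h : α → ℝ) x| ∂ν ≤ ‖h‖ := by
    intro h
    have hint : Integrable (h : α → ℝ) ν :=
      ((Lp.memLp h).mono_exponent (by norm_num)).integrable le_rfl
    have h1 : ∫ x, |(h : α → ℝ) x| ∂ν = (eLpNorm (h : α → ℝ) 1 ν).toReal := by
      rw [eLpNorm_one_eq_lintegral_enorm]
      simpa [Real.norm_eq_abs] using
        integral_norm_eq_lintegral_enorm (Lp.aestronglyMeasurable h)
    rw [h1, Lp.norm_def]
    exact ENNReal.toReal_mono (Lp.eLpNorm_ne_top h)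
      (eLpNorm_le_eLpNorm_of_exponent_le (by norm_num) (Lp.aestronglyMeasurable h))
  -- von Neumann
  have hconv := U.tendsto_birkhoffAverage_orthogonalProjection hUnorm F
  set G : Lp ℝ 2 ν := ↑((Submodule.orthogonalProjectionOnto (U.eqLocus (1 : Lp ℝ 2 ν →L[ℝ] Lp ℝ 2 ν))) F) with hG
  have hGfix : U G = G := by
    have := ((Submodule.orthogonalProjectionOnto (U.eqLocus (1 : Lp ℝ 2 ν →L[ℝ] Lp ℝ 2 ν))) F).2
    rw [LinearMap.mem_eqLocus] at this
    simpa [hG] using this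
  have hGinv : (G : α → ℝ) ∘ T =ᵐ[ν] (G : α → ℝ) := by
    have h1 : (U G : α → ℝ) =ᵐ[ν] (G : α → ℝ) ∘ T := Lp.coeFn_compMeasurePreserving _ hmp
    rw [hGfix] at h1
    exact h1.symm
  obtain ⟨b, hb⟩ := hT.ae_eq_const_of_ae_eq_comp_ae (Lp.aestronglyMeasurable G) hGinv
  -- identify b with the mean of f
  set I : ℝ := ∫ y, f y ∂ν with hI
  have hfint : Integrable f ν := hmem.integrable (by norm_num)
  have hbam : ∀ N : ℕ, 1 ≤ N → ∫ x, ((birkhoffAverage ℝ U _root_.id N F : Lp ℝ 2 ν) : α → ℝ) x ∂ν = I := by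
    intro N hN
    rw [integral_congr_ae (hba N)]
    have hcomp : ∀ j : ℕ, ∫ x, f (T^[j] x) ∂ν = I := by
      intro j
      rw [hI, ← integral_map (hmp.iterate j).measurable.aemeasurable hfm.aestronglyMeasurable,
        (hmp.iterate j).map_eq]
    have hintj : ∀ j : ℕ, Integrable (fun x => f (T^[j] x)) ν := fun j =>
      ((hmp.iterate j).integrable_comp hfm.aestronglyMeasurable).mpr hfint
    rw [MeasureTheory.integral_const_mul, integral_finset_sum _ fun j _ => hintj j]
    simp only [hcomp, Finset.sum_const, Finset.card_range, nsmul_eq_mul]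
    field_simp
  have hGb : ∫ x, (G : α → ℝ) x ∂ν = b := by
    rw [integral_congr_ae hb]
    simp
  have hbI : b = I := by
    have h2 : Tendsto (fun N => ∫ x, ((birkhoffAverage ℝ U _root_.id N F : Lp ℝ 2 ν) : α → ℝ) x ∂ν)
        atTop (𝓝 (∫ x, (G : α → ℝ) x ∂ν)) := by
      rw [Metric.tendsto_atTop]
      intro ε hε
      rw [Metric.tendsto_atTop] at hconv
      obtain ⟨N₀, hN₀⟩ := hconv ε hε
      refine ⟨N₀, fun N hN => ?_⟩
      have hsub : Integrable ((birkhoffAverage ℝ U _root_.id N F : Lp ℝ 2 ν) : α → ℝ) ν :=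
        ((Lp.memLp _).mono_exponent (by norm_num)).integrable le_rfl
      have hGint : Integrable ((G : α → ℝ)) ν :=
        ((Lp.memLp _).mono_exponent (by norm_num)).integrable le_rfl
      rw [Real.dist_eq, ← integral_sub hsub hGint]
      calc |∫ x, (((birkhoffAverage ℝ U _root_.id N F : Lp ℝ 2 ν) : α → ℝ) x - (G : α → ℝ) x) ∂ν|
          ≤ ∫ x, |((birkhoffAverage ℝ U _root_.id N F : Lp ℝ 2 ν) : α → ℝ) x - (G : α → ℝ) x| ∂ν := by
            simpa [Real.norm_eq_abs] using
              norm_integral_le_integral_norm (μ := ν)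
                (f := fun x => ((birkhoffAverage ℝ U _root_.id N F : Lp ℝ 2 ν) : α → ℝ) x - (G : α → ℝ) x)
        _ ≤ ‖birkhoffAverage ℝ U _root_.id N F - G‖ := by
            refine le_trans (le_of_eq (integral_congr_ae ?_)) (hL1 _)
            filter_upwards [Lp.coeFn_sub (birkhoffAverage ℝ U _root_.id N F) G] with x hx
            rw [hx]; rfl
        _ < ε := by simpa [dist_eq_norm] using hN₀ N hN
    have h3 : Tendsto (fun N : ℕ => I) atTop (𝓝 (∫ x, (G : α → ℝ) x ∂ν)) := by
      refine h2.congr' ?_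
      filter_upwards [eventually_ge_atTop 1] with N hN using hbam N hN
    rw [hGb] at h3
    exact (tendsto_nhds_unique tendsto_const_nhds h3).symm
  -- conclude
  have hbound : ∀ N : ℕ,
      ∫ x, |(N:ℝ)⁻¹ * ∑ j ∈ Finset.range N, f (T^[j] x) - I| ∂ν
        ≤ ‖birkhoffAverage ℝ U _root_.id N F - G‖ := by
    intro N
    refine le_trans (le_of_eq (integral_congr_ae ?_)) (hL1 _)
    filter_upwards [Lp.coeFn_sub (birkhoffAverage ℝ U _root_.id N F) G, hba N, hb] with x h1 h2 h3
    rw [h1]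
    simp only [Pi.sub_apply, h2, h3, hbI]
    rfl
  have hnorm0 : Tendsto (fun N => ‖birkhoffAverage ℝ U _root_.id N F - G‖) atTop (𝓝 0) := by
    simpa [dist_eq_norm] using (tendsto_iff_dist_tendsto_zero.mp hconv)
  refine squeeze_zero (fun N => integral_nonneg fun x => abs_nonneg _) hbound hnorm0

private lemma sum_Icc_one_succ {M : Type*} [AddCommMonoid M] (f : ℕ → M) (n : ℕ) :
    ∑ k ∈ Finset.Icc 1 (n+1), f k = (∑ k ∈ Finset.Icc 1 n, f k) + f (n+1) := by
  rw [← Finset.insert_Icc_right_eq_Icc_add_one (by omega), Finset.sum_insert (by simp), add_comm]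

private lemma sum_Icc_one_eq_range {M : Type*} [AddCommMonoid M] (f : ℕ → M) (n : ℕ) :
    ∑ k ∈ Finset.Icc 1 n, f k = ∑ j ∈ Finset.range n, f (1+j) := by
  induction n with
  | zero => simp
  | succ n ih => rw [sum_Icc_one_succ, Finset.sum_range_succ, ih, add_comm 1 n]

private lemma sum_Icc_one_add {M : Type*} [AddCommMonoid M] (f : ℕ → M) (N n : ℕ) :
    ∑ k ∈ Finset.Icc 1 (N+n), f k
      = (∑ k ∈ Finset.Icc 1 N, f k) + ∑ j ∈ Finset.Icc 1 n, f (N+j) := by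
  induction n with
  | zero => simp
  | succ n ih => rw [← add_assoc, sum_Icc_one_succ, ih, sum_Icc_one_succ (fun j => f (N+j)),
      add_assoc, add_assoc]

set_option maxHeartbeats 2000000 in
/-- **Law of large numbers for a triangular array with ergodic limit**:
`(1/N) Σ_{k=1}^N X_{m,k} → 0` in `L¹` as `min(N,m) → ∞`. -/
theorem lln_triangular_array_ergodic
    {Ω : Type*} [MeasurableSpace Ω] (μ : Measure Ω) [IsProbabilityMeasure μ]
    (X : ℕ → ℤ → Ω → ℝ) (Y : ℤ → Ω → ℝ)
    -- integrability
    (hint : ∀ m k, Integrable (X m k) μ)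
    -- each row is strictly stationary with mean 0
    (hstat : ∀ (m : ℕ) (l : ℤ),
      Measure.map (fun ω (k : ℤ) => X m (k + l) ω) μ
        = Measure.map (fun ω (k : ℤ) => X m k ω) μ)
    (hmean : ∀ m k, ∫ ω, X m k ω ∂μ = 0)
    -- uniform integrability in `m` for each fixed `k`
    (hUI : ∀ (k : ℤ) (ε : ℝ), 0 < ε → ∃ c : ℝ, ∀ m : ℕ,
      ∫ ω in {ω | c ≤ |X m k ω|}, |X m k ω| ∂μ ≤ ε)
    -- the finite-dimensional distributions converge to those of `(Y_k)`
    (hfdd : ∀ (r : ℕ) (ks : Fin r → ℤ) (φ : BoundedContinuousFunction (Fin r → ℝ) ℝ),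
      Tendsto (fun m : ℕ => ∫ ω, φ (fun i => X m (ks i) ω) ∂μ) atTop
        (𝓝 (∫ ω, φ (fun i => Y (ks i) ω) ∂μ)))
    -- `(Y_k)` is stationary, ergodic and integrable
    (hYmeas : ∀ k, Measurable (Y k))
    (hYerg : Ergodic (fun x : ℤ → ℝ => fun k => x (k + 1))
      (Measure.map (fun ω (k : ℤ) => Y k ω) μ))
    (hYint : ∀ k : ℤ, Integrable (Y k) μ) :
    Tendsto
      (fun p : ℕ × ℕ => ∫ ω, |(p.1 : ℝ)⁻¹ * ∑ k ∈ Finset.Icc 1 p.1, X p.2 (k : ℤ) ω| ∂μ)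
      atTop (𝓝 0) := by

  classical
  -- measurable modifications
  have hXm : ∀ m k, AEMeasurable (X m k) μ := fun m k => (hint m k).1.aemeasurable
  set X' : ℕ → ℤ → Ω → ℝ := fun m k => (hXm m k).mk _ with hX'def
  have hX'meas : ∀ m k, Measurable (X' m k) := fun m k => (hXm m k).measurable_mk
  have hX'ae : ∀ m k, X m k =ᵐ[μ] X' m k := fun m k => (hXm m k).ae_eq_mk
  have hall : ∀ m, ∀ᵐ ω ∂μ, ∀ k, X m k ω = X' m k ω := fun m =>
    (ae_all_iff).2 fun k => hX'ae m k
  have hX'int : ∀ m k, Integrable (X' m k) μ := fun m k => (hint m k).congr (hX'ae m k)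
  have hX'mean : ∀ m k, ∫ ω, X' m k ω ∂μ = 0 := fun m k => by
    rw [← integral_congr_ae (hX'ae m k)]; exact hmean m k
  -- shift invariance of integrals of functions of the sequence
  have key : ∀ (m : ℕ) (l : ℤ) (F : (ℤ → ℝ) → ℝ), Measurable F →
      ∫ ω, F (fun k => X' m (k + l) ω) ∂μ = ∫ ω, F (fun k => X' m k ω) ∂μ := by
    intro m l F hF
    have h1 : Measurable (fun ω (k : ℤ) => X' m (k + l) ω) :=
      measurable_pi_lambda _ fun k => hX'meas m (k + l)
    have h2 : Measurable (fun ω (k : ℤ) => X' m k ω) :=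
      measurable_pi_lambda _ fun k => hX'meas m k
    have e1 : (fun ω (k : ℤ) => X m (k + l) ω) =ᵐ[μ] (fun ω (k : ℤ) => X' m (k + l) ω) := by
      filter_upwards [hall m] with ω hω
      exact funext fun k => hω (k + l)
    have e2 : (fun ω (k : ℤ) => X m k ω) =ᵐ[μ] (fun ω (k : ℤ) => X' m k ω) := by
      filter_upwards [hall m] with ω hω
      exact funext fun k => hω k
    have hmap : Measure.map (fun ω (k : ℤ) => X' m (k + l) ω) μ
        = Measure.map (fun ω (k : ℤ) => X' m k ω) μ := by
      rw [← Measure.map_congr e1, ← Measure.map_congr e2]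
      exact hstat m l
    rw [← integral_map h1.aemeasurable hF.aestronglyMeasurable,
        ← integral_map h2.aemeasurable hF.aestronglyMeasurable, hmap]
  -- reduce goal to X'
  rw [Metric.tendsto_atTop]
  intro ε hε
  set ε' : ℝ := ε / 6 with hε'def
  have hε' : 0 < ε' := by positivity
  -- truncation level
  obtain ⟨c₁, hc₁⟩ := hUI 1 ε' hε'
  set c : ℝ := max c₁ 1 with hcdef
  have hc0 : (0:ℝ) < c := lt_of_lt_of_le one_pos (le_max_right _ _)
  set ψ : ℝ → ℝ := fun x => if c ≤ |x| then |x| else 0 with hψdef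
  have hψmeas : Measurable ψ := by
    apply Measurable.ite _ measurable_abs measurable_const
    exact measurableSet_le measurable_const measurable_abs
  have hψnonneg : ∀ x, 0 ≤ ψ x := by
    intro x; by_cases h : c ≤ |x| <;> simp [hψdef, h, abs_nonneg]
  have hψle : ∀ x, ψ x ≤ |x| := by
    intro x; by_cases h : c ≤ |x| <;> simp [hψdef, h, abs_nonneg]
  -- uniform integrability bound for X' at k = 1
  have hUI1 : ∀ m, ∫ ω, ψ (X' m 1 ω) ∂μ ≤ ε' := by
    intro m
    set S : Set Ω := {ω | c₁ ≤ |X' m 1 ω|} with hSdef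
    have hSmeas : MeasurableSet S :=
      measurableSet_le measurable_const (hX'meas m 1).abs
    have hSae : {ω | c₁ ≤ |X m 1 ω|} =ᵐ[μ] S := by
      filter_upwards [hX'ae m 1] with ω hω
      change (c₁ ≤ |X m 1 ω|) = (c₁ ≤ |X' m 1 ω|)
      rw [hω]
    have hres : ∫ ω in {ω | c₁ ≤ |X m 1 ω|}, |X m 1 ω| ∂μ = ∫ ω in S, |X' m 1 ω| ∂μ := by
      rw [Measure.restrict_congr_set hSae]
      exact integral_congr_ae (ae_restrict_of_ae ((hX'ae m 1).mono fun ω hω => by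
        dsimp only; rw [hω]))
    have hind : ∫ ω in S, |X' m 1 ω| ∂μ = ∫ ω, S.indicator (fun ω => |X' m 1 ω|) ω ∂μ :=
      (integral_indicator hSmeas).symm
    have hintind : Integrable (S.indicator (fun ω => |X' m 1 ω|)) μ :=
      (hX'int m 1).abs.indicator hSmeas
    have hψint : Integrable (fun ω => ψ (X' m 1 ω)) μ := by
      refine Integrable.mono (hX'int m 1).abs
        ((hψmeas.comp (hX'meas m 1)).aestronglyMeasurable)
        (Filter.Eventually.of_forall fun ω => ?_)
      simp only [Real.norm_eq_abs]
      rw [abs_of_nonneg (hψnonneg _), abs_abs]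
      exact hψle _
    have hle : ∀ ω, ψ (X' m 1 ω) ≤ S.indicator (fun ω => |X' m 1 ω|) ω := by
      intro ω
      by_cases h : c ≤ |X' m 1 ω|
      · have hS : ω ∈ S := by
          simp only [hSdef, Set.mem_setOf_eq]
          exact le_trans (le_max_left _ _) h
        rw [Set.indicator_of_mem hS]
        simp [hψdef, h]
      · simp only [hψdef, if_neg h]
        exact Set.indicator_nonneg (fun ω _ => abs_nonneg _) ω
    calc ∫ ω, ψ (X' m 1 ω) ∂μ ≤ ∫ ω, S.indicator (fun ω => |X' m 1 ω|) ω ∂μ :=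
          integral_mono hψint hintind hle
      _ = ∫ ω in {ω | c₁ ≤ |X m 1 ω|}, |X m 1 ω| ∂μ := by rw [hres, hind]
      _ ≤ ε' := hc₁ m
  -- uniform integrability bound at all k
  have hUIk : ∀ m k, ∫ ω, ψ (X' m k ω) ∂μ ≤ ε' := by
    intro m k
    have := key m (k - 1) (fun x => ψ (x 1)) (hψmeas.comp (measurable_pi_apply 1))
    simp only at this
    rw [show (1 : ℤ) + (k - 1) = k by ring] at this
    rw [this]
    exact hUI1 m
  -- the truncation map
  set g : ℝ → ℝ := fun x => max (-c) (min x c) with hgdef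
  have hgcont : Continuous g := continuous_const.max (continuous_id.min continuous_const)
  have hgmeas : Measurable g := hgcont.measurable
  have hgbdd : ∀ x, |g x| ≤ c := by
    intro x
    rw [abs_le]
    constructor
    · exact le_max_left _ _
    · exact max_le (by linarith) (min_le_right _ _)
  have hgdiff : ∀ x, |x - g x| ≤ ψ x := by
    intro x
    by_cases h : c ≤ |x|
    · simp only [hψdef, if_pos h]
      rcases le_or_gt 0 x with hx | hx
      · have hxc : c ≤ x := by rwa [abs_of_nonneg hx] at h
        have : g x = c := by
          simp only [hgdef]
          rw [min_eq_right hxc, max_eq_right (by linarith)]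
        rw [this, abs_of_nonneg (by linarith), abs_of_nonneg hx]
        linarith
      · have hxc : x ≤ -c := by
          rw [abs_of_neg hx] at h; linarith
        have : g x = -c := by
          simp only [hgdef]
          rw [min_eq_left (by linarith), max_eq_left hxc]
        rw [this, abs_of_nonpos (by linarith), abs_of_neg hx]
        linarith
    · push_neg at h
      have h1 : -c < x ∧ x < c := abs_lt.mp h
      have : g x = x := by
        simp only [hgdef]
        rw [min_eq_left h1.2.le, max_eq_right h1.1.le]
      rw [this, sub_self, abs_zero]
      exact hψnonneg x
  -- truncated variables
  set Z : ℕ → ℤ → Ω → ℝ := fun m k ω => g (X' m k ω) with hZdef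
  have hZmeas : ∀ m k, Measurable (Z m k) := fun m k => hgmeas.comp (hX'meas m k)
  have hZint : ∀ m k, Integrable (Z m k) μ := fun m k =>
    memLp_one_iff_integrable.mp <| MemLp.of_bound (hZmeas m k).aestronglyMeasurable c
      (Filter.Eventually.of_forall fun ω => by simpa [Real.norm_eq_abs] using hgbdd (X' m k ω))
  have htrunc : ∀ m k, ∫ ω, |X' m k ω - Z m k ω| ∂μ ≤ ε' := by
    intro m k
    have h1 : Integrable (fun ω => |X' m k ω - Z m k ω|) μ := ((hX'int m k).sub (hZint m k)).abs
    have h2 : Integrable (fun ω => ψ (X' m k ω)) μ := by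
      refine Integrable.mono (hX'int m k).abs
        (hψmeas.comp (hX'meas m k)).aestronglyMeasurable
        (Filter.Eventually.of_forall fun ω => ?_)
      simp only [Real.norm_eq_abs]
      rw [abs_of_nonneg (hψnonneg _), abs_abs]
      exact hψle _
    calc ∫ ω, |X' m k ω - Z m k ω| ∂μ ≤ ∫ ω, ψ (X' m k ω) ∂μ :=
          integral_mono h1 h2 fun ω => hgdiff (X' m k ω)
      _ ≤ ε' := hUIk m k
  have hZmean : ∀ m k, |∫ ω, Z m k ω ∂μ| ≤ ε' := by
    intro m k
    have : ∫ ω, Z m k ω ∂μ = ∫ ω, (Z m k ω - X' m k ω) ∂μ := by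
      rw [integral_sub (hZint m k) (hX'int m k), hX'mean m k, sub_zero]
    rw [this]
    calc |∫ ω, (Z m k ω - X' m k ω) ∂μ| ≤ ∫ ω, |Z m k ω - X' m k ω| ∂μ := by
          simpa [Real.norm_eq_abs] using
            norm_integral_le_integral_norm (fun ω => Z m k ω - X' m k ω) (μ := μ)
      _ = ∫ ω, |X' m k ω - Z m k ω| ∂μ := by
          congr 1; funext ω; rw [abs_sub_comm]
      _ ≤ ε' := htrunc m k
  -- block averages
  set a : ℕ → ℕ → ℝ := fun m M => ∫ ω, |∑ k ∈ Finset.Icc 1 M, Z m (k : ℤ) ω| ∂μ with hadef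
  have hZsumint : ∀ m (s : Finset ℕ) (j : ℤ), Integrable (fun ω => ∑ k ∈ s, Z m ((k:ℤ) + j) ω) μ :=
    fun m s j => integrable_finset_sum _ fun k _ => hZint m _
  have ha_nonneg : ∀ m M, 0 ≤ a m M := fun m M => integral_nonneg fun ω => abs_nonneg _
  -- stationarity of block averages
  have hstatZ : ∀ (m : ℕ) (j : ℤ) (M : ℕ),
      ∫ ω, |∑ k ∈ Finset.Icc 1 M, Z m ((k:ℤ) + j) ω| ∂μ = a m M := by
    intro m j M
    have hF : Measurable (fun x : ℤ → ℝ => |∑ k ∈ Finset.Icc 1 M, g (x (k:ℤ))|) := by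
      apply Measurable.abs
      exact Finset.measurable_sum _ fun k _ => hgmeas.comp (measurable_pi_apply _)
    have h := key m j _ hF
    simp only [hadef, hZdef]
    exact h
  -- subadditivity
  have hsub : ∀ m N M, a m (N + M) ≤ a m N + a m M := by
    intro m N M
    have e1 : a m (N+M) = ∫ ω, |(∑ k ∈ Finset.Icc 1 N, Z m (k:ℤ) ω)
        + ∑ j ∈ Finset.Icc 1 M, Z m ((j:ℤ) + (N:ℤ)) ω| ∂μ := by
      simp only [hadef]
      congr 1
      funext ω
      rw [sum_Icc_one_add (fun k => Z m (k:ℤ) ω) N M]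
      have e2 : ∀ j : ℕ, ((N + j : ℕ) : ℤ) = (j:ℤ) + (N:ℤ) := fun j => by push_cast; ring
      simp only [e2]
    have hint1 : Integrable (fun ω => ∑ k ∈ Finset.Icc 1 N, Z m (k:ℤ) ω) μ :=
      integrable_finset_sum _ fun k _ => hZint m _
    have hint2 : Integrable (fun ω => ∑ j ∈ Finset.Icc 1 M, Z m ((j:ℤ) + (N:ℤ)) ω) μ :=
      integrable_finset_sum _ fun k _ => hZint m _
    rw [e1]
    calc ∫ ω, |(∑ k ∈ Finset.Icc 1 N, Z m (k:ℤ) ω)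
          + ∑ j ∈ Finset.Icc 1 M, Z m ((j:ℤ) + (N:ℤ)) ω| ∂μ
        ≤ ∫ ω, (|∑ k ∈ Finset.Icc 1 N, Z m (k:ℤ) ω|
          + |∑ j ∈ Finset.Icc 1 M, Z m ((j:ℤ) + (N:ℤ)) ω|) ∂μ :=
          integral_mono (hint1.add hint2).abs (hint1.abs.add hint2.abs)
            fun ω => abs_add_le _ _
      _ = (∫ ω, |∑ k ∈ Finset.Icc 1 N, Z m (k:ℤ) ω| ∂μ)
          + ∫ ω, |∑ j ∈ Finset.Icc 1 M, Z m ((j:ℤ) + (N:ℤ)) ω| ∂μ :=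
          integral_add hint1.abs hint2.abs
      _ = a m N + a m M := by rw [hstatZ m (N:ℤ) M]
  -- crude bound
  have ha_le : ∀ m M, a m M ≤ M * c := by
    intro m M
    have h1 : ∀ k : ℤ, ∫ ω, |Z m k ω| ∂μ ≤ c := by
      intro k
      calc ∫ ω, |Z m k ω| ∂μ ≤ ∫ _ω, c ∂μ :=
            integral_mono (hZint m k).abs (integrable_const c) fun ω => hgbdd _
        _ = c := by simp
    calc a m M ≤ ∫ ω, ∑ k ∈ Finset.Icc 1 M, |Z m (k:ℤ) ω| ∂μ := by
          simp only [hadef]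
          exact integral_mono (integrable_finset_sum _ fun k _ => hZint m _).abs
            (integrable_finset_sum _ fun k _ => (hZint m _).abs)
            fun ω => Finset.abs_sum_le_sum_abs _ _
      _ = ∑ k ∈ Finset.Icc 1 M, ∫ ω, |Z m (k:ℤ) ω| ∂μ :=
          integral_finset_sum _ fun k _ => (hZint m _).abs
      _ ≤ ∑ _k ∈ Finset.Icc 1 M, c := Finset.sum_le_sum fun k _ => h1 _
      _ = M * c := by simp [Finset.sum_const, Nat.card_Icc]
  -- key division bound
  have hakey : ∀ (m M N : ℕ), 1 ≤ M → 1 ≤ N →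
      (N:ℝ)⁻¹ * a m N ≤ a m M / M + M * c / N := by
    intro m M N hM hN
    have hNpos : (0:ℝ) < N := by exact_mod_cast hN
    have hMpos : (0:ℝ) < M := by exact_mod_cast hM
    have ha0 : a m 0 = 0 := by simp [hadef]
    have haq : ∀ q : ℕ, a m (M * q) ≤ q * a m M := by
      intro q
      induction q with
      | zero => simp [ha0]
      | succ q ih =>
        have e : M * (q+1) = M*q + M := by ring
        calc a m (M * (q+1)) = a m (M*q + M) := by rw [e]
          _ ≤ a m (M*q) + a m M := hsub m (M*q) M
          _ ≤ q * a m M + a m M := by linarith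
          _ = ((q+1 : ℕ) : ℝ) * a m M := by push_cast; ring
    have split : a m N ≤ ((N / M : ℕ) : ℝ) * a m M + ((N % M : ℕ) : ℝ) * c := by
      calc a m N = a m (M * (N/M) + N % M) := by rw [Nat.div_add_mod]
        _ ≤ a m (M * (N/M)) + a m (N % M) := hsub m _ _
        _ ≤ ((N / M : ℕ) : ℝ) * a m M + ((N % M : ℕ) : ℝ) * c :=
            add_le_add (haq _) (ha_le m _)
    have hmod : ((N % M : ℕ) : ℝ) ≤ M := by
      exact_mod_cast (Nat.mod_lt N (by omega)).le
    have hdiv : ((N / M : ℕ) : ℝ) ≤ (N:ℝ) / M := Nat.cast_div_le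
    calc (N:ℝ)⁻¹ * a m N
        ≤ (N:ℝ)⁻¹ * (((N:ℝ)/M) * a m M + (M:ℝ) * c) := by
          refine mul_le_mul_of_nonneg_left ?_ (by positivity)
          refine le_trans split (add_le_add
            (mul_le_mul_of_nonneg_right hdiv (ha_nonneg m M))
            (mul_le_mul_of_nonneg_right hmod hc0.le))
      _ = a m M / M + M * c / N := by field_simp
  -- fdd convergence of block averages
  set A : ℕ → ℝ := fun M => ∫ ω, |∑ k ∈ Finset.Icc 1 M, g (Y (k:ℤ) ω)| ∂μ with hAdef
  have hfddM : ∀ M : ℕ, Tendsto (fun m => a m M) atTop (𝓝 (A M)) := by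
    intro M
    set ks : Fin M → ℤ := fun i => ((i:ℕ):ℤ) + 1 with hksdef
    set φf : (Fin M → ℝ) → ℝ := fun v => |∑ i, g (v i)| with hφfdef
    have hφcont : Continuous φf :=
      (continuous_finset_sum _ fun i _ => hgcont.comp (continuous_apply i)).abs
    have hφbdd : ∀ v, ‖φf v‖ ≤ M * c := by
      intro v
      rw [Real.norm_eq_abs, hφfdef, abs_abs]
      calc |∑ i, g (v i)| ≤ ∑ i, |g (v i)| := Finset.abs_sum_le_sum_abs _ _
        _ ≤ ∑ _i : Fin M, c := Finset.sum_le_sum fun i _ => hgbdd _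
        _ = M * c := by simp [Finset.sum_const, mul_comm]
    set φ : BoundedContinuousFunction (Fin M → ℝ) ℝ :=
      BoundedContinuousFunction.ofNormedAddCommGroup φf hφcont (M*c) hφbdd with hφdef
    have hφapp : ∀ v, φ v = |∑ i, g (v i)| := fun v => rfl
    have hsum_eq : ∀ (W : ℤ → ℝ), |∑ i : Fin M, g (W (((i:ℕ):ℤ) + 1))|
        = |∑ k ∈ Finset.Icc 1 M, g (W (k:ℤ))| := by
      intro W
      congr 1
      rw [Fin.sum_univ_eq_sum_range (fun j => g (W ((j:ℤ) + 1))) M,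
        sum_Icc_one_eq_range (fun k => g (W (k:ℤ))) M]
      refine Finset.sum_congr rfl fun j _ => ?_
      have : ((1 + j : ℕ) : ℤ) = (j:ℤ) + 1 := by push_cast; ring
      rw [this]
    have h0 := hfdd M ks φ
    have e1 : ∀ m, ∫ ω, φ (fun i => X m (ks i) ω) ∂μ = a m M := by
      intro m
      have e2 : ∫ ω, φ (fun i => X m (ks i) ω) ∂μ = ∫ ω, φ (fun i => X' m (ks i) ω) ∂μ := by
        refine integral_congr_ae ?_
        filter_upwards [hall m] with ω hω
        simp only [hω]
      rw [e2]
      simp only [hadef, hZdef]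
      refine integral_congr_ae (Filter.Eventually.of_forall fun ω => ?_)
      dsimp only
      rw [hφapp]
      exact hsum_eq (fun k => X' m k ω)
    have e3 : ∫ ω, φ (fun i => Y (ks i) ω) ∂μ = A M := by
      simp only [hAdef]
      refine integral_congr_ae (Filter.Eventually.of_forall fun ω => ?_)
      dsimp only
      rw [hφapp]
      exact hsum_eq (fun k => Y k ω)
    rw [← e3]
    exact h0.congr e1
  -- mean of the truncated limit variable
  set I : ℝ := ∫ ω, g (Y 1 ω) ∂μ with hIdef
  have hI : |I| ≤ ε' := by
    set φf : (Fin 1 → ℝ) → ℝ := fun v => g (v 0) with hφfdef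
    have hφcont : Continuous φf := hgcont.comp (continuous_apply 0)
    have hφbdd : ∀ v, ‖φf v‖ ≤ c := fun v => by
      rw [Real.norm_eq_abs]; exact hgbdd _
    set φ : BoundedContinuousFunction (Fin 1 → ℝ) ℝ :=
      BoundedContinuousFunction.ofNormedAddCommGroup φf hφcont c hφbdd with hφdef
    have h0 := hfdd 1 (fun _ => (1:ℤ)) φ
    have e3 : ∫ ω, φ (fun _i : Fin 1 => Y 1 ω) ∂μ = I := rfl
    rw [e3] at h0
    have h1 : Tendsto (fun m => |∫ ω, φ (fun _i : Fin 1 => X m 1 ω) ∂μ|) atTop (𝓝 |I|) :=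
      h0.abs
    refine le_of_tendsto h1 (Filter.Eventually.of_forall fun m => ?_)
    have e4 : ∫ ω, φ (fun _i : Fin 1 => X m 1 ω) ∂μ = ∫ ω, Z m 1 ω ∂μ := by
      refine integral_congr_ae ?_
      filter_upwards [hX'ae m 1] with ω hω
      show g (X m 1 ω) = g (X' m 1 ω)
      rw [hω]
    rw [e4]
    exact hZmean m 1
  -- ergodic theorem for the limit sequence
  have herg : Tendsto (fun M : ℕ =>
      ∫ ω, |(M:ℝ)⁻¹ * ∑ j ∈ Finset.range M, g (Y (1 + (j:ℤ)) ω) - I| ∂μ) atTop (𝓝 0) := by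
    have hYseq : Measurable (fun ω (k : ℤ) => Y k ω) := measurable_pi_lambda _ fun k => hYmeas k
    set ν : Measure (ℤ → ℝ) := Measure.map (fun ω (k : ℤ) => Y k ω) μ with hνdef
    haveI : IsProbabilityMeasure ν := Measure.isProbabilityMeasure_map hYseq.aemeasurable
    set T : (ℤ → ℝ) → (ℤ → ℝ) := fun x k => x (k + 1) with hTdef
    have hiterT : ∀ (j : ℕ) (x : ℤ → ℝ) (k : ℤ), (T^[j] x) k = x (k + j) := by
      intro j
      induction j with
      | zero => intro x k; simp
      | succ j ih =>
        intro x k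
        rw [Function.iterate_succ_apply, ih (T x) k]
        show x (k + (j:ℤ) + 1) = x (k + ((j:ℕ)+1 : ℕ))
        congr 1
        push_cast
        ring
    have hfm : Measurable (fun x : ℤ → ℝ => g (x 1)) := hgmeas.comp (measurable_pi_apply 1)
    have hfb : ∀ x : ℤ → ℝ, |g (x 1)| ≤ c := fun x => hgbdd _
    have h0 := meanErgodicL1 hYerg hfm hfb
    have hIν : ∫ y, g (y 1) ∂ν = I := by
      rw [hνdef, integral_map hYseq.aemeasurable hfm.aestronglyMeasurable]
    have hterm : ∀ M : ℕ,
        ∫ x, |(M:ℝ)⁻¹ * ∑ j ∈ Finset.range M, g ((T^[j] x) 1) - ∫ y, g (y 1) ∂ν| ∂ν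
          = ∫ ω, |(M:ℝ)⁻¹ * ∑ j ∈ Finset.range M, g (Y (1 + (j:ℤ)) ω) - I| ∂μ := by
      intro M
      have hGm : Measurable (fun x : ℤ → ℝ =>
          |(M:ℝ)⁻¹ * ∑ j ∈ Finset.range M, g (x (1 + (j:ℤ))) - I|) :=
        ((measurable_const.mul (Finset.measurable_sum _ fun j _ =>
          hgmeas.comp (measurable_pi_apply _))).sub measurable_const).abs
      calc ∫ x, |(M:ℝ)⁻¹ * ∑ j ∈ Finset.range M, g ((T^[j] x) 1) - ∫ y, g (y 1) ∂ν| ∂ν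
          = ∫ x, |(M:ℝ)⁻¹ * ∑ j ∈ Finset.range M, g (x (1 + (j:ℤ))) - I| ∂ν := by
            rw [hIν]
            exact integral_congr_ae (Filter.Eventually.of_forall fun x => by
              simp only [hiterT])
        _ = ∫ ω, |(M:ℝ)⁻¹ * ∑ j ∈ Finset.range M, g (Y (1 + (j:ℤ)) ω) - I| ∂μ := by
            rw [hνdef, integral_map hYseq.aemeasurable hGm.aestronglyMeasurable]
    exact h0.congr hterm
  -- relation between A and the ergodic averages
  have hAM : ∀ M : ℕ, 1 ≤ M → (M:ℝ)⁻¹ * A M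
      ≤ (∫ ω, |(M:ℝ)⁻¹ * ∑ j ∈ Finset.range M, g (Y (1 + (j:ℤ)) ω) - I| ∂μ) + ε' := by
    intro M hM
    have hMpos : (0:ℝ) < M := by exact_mod_cast hM
    have hgYint : ∀ k : ℤ, Integrable (fun ω => g (Y k ω)) μ := fun k =>
      memLp_one_iff_integrable.mp <| MemLp.of_bound
        ((hgmeas.comp (hYmeas k)).aestronglyMeasurable) c
        (Filter.Eventually.of_forall fun ω => by simpa [Real.norm_eq_abs] using hgbdd (Y k ω))
    have hsumint : Integrable
        (fun ω => (M:ℝ)⁻¹ * ∑ j ∈ Finset.range M, g (Y (1+(j:ℤ)) ω)) μ :=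
      (integrable_finset_sum _ fun j _ => hgYint _).const_mul _
    have e6 : (M:ℝ)⁻¹ * A M = ∫ ω, |(M:ℝ)⁻¹ * ∑ j ∈ Finset.range M, g (Y (1+(j:ℤ)) ω)| ∂μ := by
      simp only [hAdef]
      rw [← integral_const_mul]
      refine integral_congr_ae (Filter.Eventually.of_forall fun ω => ?_)
      dsimp only
      rw [abs_mul, abs_of_nonneg (by positivity : (0:ℝ) ≤ (M:ℝ)⁻¹),
        sum_Icc_one_eq_range (fun k => g (Y (k:ℤ) ω)) M]
      have e7 : ∀ j : ℕ, ((1 + j : ℕ) : ℤ) = 1 + (j:ℤ) := fun j => by push_cast; ring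
      simp only [e7]
    rw [e6]
    calc ∫ ω, |(M:ℝ)⁻¹ * ∑ j ∈ Finset.range M, g (Y (1+(j:ℤ)) ω)| ∂μ
        ≤ ∫ ω, (|(M:ℝ)⁻¹ * ∑ j ∈ Finset.range M, g (Y (1+(j:ℤ)) ω) - I| + |I|) ∂μ := by
          refine integral_mono hsumint.abs
            (((hsumint.sub (integrable_const I)).abs).add (integrable_const |I|)) fun ω => ?_
          dsimp only
          calc |(M:ℝ)⁻¹ * ∑ j ∈ Finset.range M, g (Y (1+(j:ℤ)) ω)|
              = |((M:ℝ)⁻¹ * ∑ j ∈ Finset.range M, g (Y (1+(j:ℤ)) ω) - I) + I| := by ring_nf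
            _ ≤ |(M:ℝ)⁻¹ * ∑ j ∈ Finset.range M, g (Y (1+(j:ℤ)) ω) - I| + |I| := abs_add_le _ _
      _ = (∫ ω, |(M:ℝ)⁻¹ * ∑ j ∈ Finset.range M, g (Y (1+(j:ℤ)) ω) - I| ∂μ) + |I| := by
          have h1 : Integrable
              (fun ω => |(M:ℝ)⁻¹ * ∑ j ∈ Finset.range M, g (Y (1+(j:ℤ)) ω) - I|) μ :=
            (hsumint.sub (integrable_const I)).abs
          rw [integral_add h1 (integrable_const |I|)]
          simp
      _ ≤ (∫ ω, |(M:ℝ)⁻¹ * ∑ j ∈ Finset.range M, g (Y (1+(j:ℤ)) ω) - I| ∂μ) + ε' := by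
          linarith [hI]
  -- choose M₀
  obtain ⟨M₁, hM₁⟩ := (Metric.tendsto_atTop.mp herg) ε' hε'
  set M₀ : ℕ := max M₁ 1 with hM₀def
  have hM₀1 : 1 ≤ M₀ := le_max_right _ _
  have hM₀pos : (0:ℝ) < M₀ := by exact_mod_cast hM₀1
  have hAM₀ : (M₀:ℝ)⁻¹ * A M₀ ≤ 2 * ε' := by
    have h1 := hM₁ M₀ (le_max_left _ _)
    rw [Real.dist_eq, sub_zero, abs_of_nonneg (integral_nonneg fun ω => abs_nonneg _)] at h1
    have := hAM M₀ hM₀1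
    linarith
  -- choose m₀
  have hεM : (0:ℝ) < ε' * M₀ := by positivity
  obtain ⟨m₀, hm₀⟩ := (Metric.tendsto_atTop.mp (hfddM M₀)) (ε' * M₀) hεM
  have ham : ∀ m, m₀ ≤ m → a m M₀ / M₀ ≤ 3 * ε' := by
    intro m hm
    have h1 := hm₀ m hm
    rw [Real.dist_eq] at h1
    have h2 : a m M₀ ≤ A M₀ + ε' * M₀ := by
      have := abs_lt.mp h1
      linarith [this.2]
    have h3 : A M₀ ≤ 2 * ε' * M₀ := by
      have := hAM₀
      rw [inv_mul_le_iff₀ hM₀pos] at this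
      linarith [this]
    rw [div_le_iff₀ hM₀pos]
    linarith
  -- choose N₀
  set N₀ : ℕ := max 1 ⌈(M₀:ℝ) * c / ε'⌉₊ with hN₀def
  have hN₀1 : 1 ≤ N₀ := le_max_left _ _
  have hN₀ : ∀ N : ℕ, N₀ ≤ N → (M₀:ℝ) * c / N ≤ ε' := by
    intro N hN
    have hNpos : (0:ℝ) < N := by
      exact_mod_cast lt_of_lt_of_le hN₀1 hN
    rw [div_le_iff₀ hNpos]
    have h1 : ((M₀:ℝ) * c / ε') ≤ N := by
      calc ((M₀:ℝ) * c / ε') ≤ ⌈(M₀:ℝ) * c / ε'⌉₊ := Nat.le_ceil _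
        _ ≤ (N₀ : ℝ) := by exact_mod_cast le_max_right _ _
        _ ≤ N := by exact_mod_cast hN
    calc (M₀:ℝ) * c = ((M₀:ℝ) * c / ε') * ε' := by field_simp
      _ ≤ N * ε' := by
          apply mul_le_mul_of_nonneg_right h1 (le_of_lt hε')
      _ = ε' * N := mul_comm _ _
  -- final assembly
  refine ⟨(N₀, m₀), fun p hp => ?_⟩
  obtain ⟨N, m⟩ := p
  obtain ⟨hN : N₀ ≤ N, hm : m₀ ≤ m⟩ := hp
  have hN1 : 1 ≤ N := le_trans hN₀1 hN
  have hNpos : (0:ℝ) < N := by exact_mod_cast hN1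
  rw [Real.dist_eq, sub_zero, abs_of_nonneg (integral_nonneg fun ω => abs_nonneg _)]
  -- replace X by X'
  have hXX' : ∫ ω, |(N:ℝ)⁻¹ * ∑ k ∈ Finset.Icc 1 N, X m (k:ℤ) ω| ∂μ
      = ∫ ω, |(N:ℝ)⁻¹ * ∑ k ∈ Finset.Icc 1 N, X' m (k:ℤ) ω| ∂μ := by
    refine integral_congr_ae ?_
    filter_upwards [hall m] with ω hω
    simp only [hω]
  rw [hXX']
  have hXZint : Integrable (fun ω => ∑ k ∈ Finset.Icc 1 N, |X' m (k:ℤ) ω - Z m (k:ℤ) ω|) μ :=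
    integrable_finset_sum _ fun k _ => ((hX'int m _).sub (hZint m _)).abs
  have hZNint : Integrable (fun ω => ∑ k ∈ Finset.Icc 1 N, Z m (k:ℤ) ω) μ :=
    integrable_finset_sum _ fun k _ => hZint m _
  have hXNint : Integrable (fun ω => (N:ℝ)⁻¹ * ∑ k ∈ Finset.Icc 1 N, X' m (k:ℤ) ω) μ :=
    (integrable_finset_sum _ fun k _ => hX'int m _).const_mul _
  have hpt : ∀ ω, |(N:ℝ)⁻¹ * ∑ k ∈ Finset.Icc 1 N, X' m (k:ℤ) ω|
      ≤ (N:ℝ)⁻¹ * (∑ k ∈ Finset.Icc 1 N, |X' m (k:ℤ) ω - Z m (k:ℤ) ω|)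
        + |(N:ℝ)⁻¹ * ∑ k ∈ Finset.Icc 1 N, Z m (k:ℤ) ω| := by
    intro ω
    have e7 : (N:ℝ)⁻¹ * ∑ k ∈ Finset.Icc 1 N, X' m (k:ℤ) ω
        = ((N:ℝ)⁻¹ * ∑ k ∈ Finset.Icc 1 N, (X' m (k:ℤ) ω - Z m (k:ℤ) ω))
          + (N:ℝ)⁻¹ * ∑ k ∈ Finset.Icc 1 N, Z m (k:ℤ) ω := by
      rw [Finset.sum_sub_distrib]
      ring
    rw [e7]
    refine le_trans (abs_add_le _ _) (add_le_add_left ?_ _)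
    rw [abs_mul, abs_of_nonneg (by positivity : (0:ℝ) ≤ (N:ℝ)⁻¹)]
    exact mul_le_mul_of_nonneg_left (Finset.abs_sum_le_sum_abs _ _) (by positivity)
  have hZNabs : ∫ ω, |(N:ℝ)⁻¹ * ∑ k ∈ Finset.Icc 1 N, Z m (k:ℤ) ω| ∂μ
      = (N:ℝ)⁻¹ * a m N := by
    simp only [hadef]
    rw [← integral_const_mul]
    refine integral_congr_ae (Filter.Eventually.of_forall fun ω => ?_)
    dsimp only
    rw [abs_mul, abs_of_nonneg (by positivity : (0:ℝ) ≤ (N:ℝ)⁻¹)]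
  have hsum_trunc : ∑ k ∈ Finset.Icc 1 N, ∫ ω, |X' m (k:ℤ) ω - Z m (k:ℤ) ω| ∂μ ≤ N * ε' := by
    calc ∑ k ∈ Finset.Icc 1 N, ∫ ω, |X' m (k:ℤ) ω - Z m (k:ℤ) ω| ∂μ
        ≤ ∑ _k ∈ Finset.Icc 1 N, ε' := Finset.sum_le_sum fun k _ => htrunc m _
      _ = N * ε' := by simp [Finset.sum_const, Nat.card_Icc]
  have hstep : ∫ ω, |(N:ℝ)⁻¹ * ∑ k ∈ Finset.Icc 1 N, X' m (k:ℤ) ω| ∂μ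
      ≤ ε' + (N:ℝ)⁻¹ * a m N := by
    calc ∫ ω, |(N:ℝ)⁻¹ * ∑ k ∈ Finset.Icc 1 N, X' m (k:ℤ) ω| ∂μ
        ≤ ∫ ω, ((N:ℝ)⁻¹ * (∑ k ∈ Finset.Icc 1 N, |X' m (k:ℤ) ω - Z m (k:ℤ) ω|)
          + |(N:ℝ)⁻¹ * ∑ k ∈ Finset.Icc 1 N, Z m (k:ℤ) ω|) ∂μ :=
          integral_mono hXNint.abs
            ((hXZint.const_mul _).add ((hZNint.const_mul _).abs)) hpt
      _ = (N:ℝ)⁻¹ * (∑ k ∈ Finset.Icc 1 N, ∫ ω, |X' m (k:ℤ) ω - Z m (k:ℤ) ω| ∂μ)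
          + (N:ℝ)⁻¹ * a m N := by
          have h1 : Integrable
              (fun ω => (N:ℝ)⁻¹ * ∑ k ∈ Finset.Icc 1 N, |X' m (k:ℤ) ω - Z m (k:ℤ) ω|) μ :=
            hXZint.const_mul _
          have h2 : Integrable
              (fun ω => |(N:ℝ)⁻¹ * ∑ k ∈ Finset.Icc 1 N, Z m (k:ℤ) ω|) μ :=
            (hZNint.const_mul _).abs
          have h3 : ∀ k ∈ Finset.Icc 1 N,
              Integrable (fun ω => |X' m (k:ℤ) ω - Z m (k:ℤ) ω|) μ :=
            fun k _ => ((hX'int m _).sub (hZint m _)).abs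
          rw [integral_add h1 h2, hZNabs, integral_const_mul, integral_finset_sum _ h3]
      _ ≤ (N:ℝ)⁻¹ * (N * ε') + (N:ℝ)⁻¹ * a m N := by
          have := mul_le_mul_of_nonneg_left hsum_trunc
            (by positivity : (0:ℝ) ≤ (N:ℝ)⁻¹)
          linarith
      _ = ε' + (N:ℝ)⁻¹ * a m N := by
          field_simp
  have hfin : (N:ℝ)⁻¹ * a m N ≤ 4 * ε' := by
    calc (N:ℝ)⁻¹ * a m N ≤ a m M₀ / M₀ + M₀ * c / N := hakey m M₀ N hM₀1 hN1
      _ ≤ 3 * ε' + ε' := add_le_add (ham m hm) (hN₀ N hN)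
      _ = 4 * ε' := by ring
  calc ∫ ω, |(N:ℝ)⁻¹ * ∑ k ∈ Finset.Icc 1 N, X' m (k:ℤ) ω| ∂μ
      ≤ ε' + (N:ℝ)⁻¹ * a m N := hstep
    _ ≤ 5 * ε' := by linarith
    _ < ε := by rw [hε'def]; linarith
end
end

section
/- Assume the filtration is commuting, the regularity condition holds, and X_0 is centered and square-integrable. Then for λ²-almost every t ∈ I, the random variable D_0(t) is a martingale difference in each coordinate: E(D_0(t) | F_{0,−1}) = 0 a.s. and E(D_0(t) | F_{−1,0}) = 0 a.s. -/
open MeasureTheory ProbabilityTheory Filter Complex Topology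

noncomputable section

/-- The filtration `F_{k,ℓ} = σ(ξ_{j,u} : j ≤ k, u ≤ ℓ)` generated by the random field `ξ`. -/
def F2 {Ω : Type*} (ξ : ℤ × ℤ → Ω → ℝ) (k ℓ : ℤ) : MeasurableSpace Ω :=
  ⨆ (p : ℤ × ℤ) (_ : p.1 ≤ k ∧ p.2 ≤ ℓ), MeasurableSpace.comap (ξ p) inferInstance

/-- The filtration is commuting: `E_{u,v} E_{a,b} X = E_{u∧a, v∧b} X` a.s. for integrable `X`. -/
def Commuting2 {Ω : Type*} [MeasurableSpace Ω] (μ : Measure Ω) (ξ : ℤ × ℤ → Ω → ℝ) : Prop :=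
  ∀ (Y : Ω → ℂ), Integrable Y μ → ∀ u v a b : ℤ,
    μ[μ[Y | F2 ξ a b] | F2 ξ u v] =ᵐ[μ] μ[Y | F2 ξ (min u a) (min v b)]

/-- The regularity condition: `E(X₀ | F_{-∞,0}) = 0` and `E(X₀ | F_{0,-∞}) = 0` a.s. -/
def Regular2 {Ω : Type*} [MeasurableSpace Ω] (μ : Measure Ω) (ξ : ℤ × ℤ → Ω → ℝ)
    (X0 : Ω → ℂ) : Prop :=
  μ[X0 | ⨅ u : ℤ, F2 ξ u 0] =ᵐ[μ] 0 ∧ μ[X0 | ⨅ v : ℤ, F2 ξ 0 v] =ᵐ[μ] 0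

/-- Strict stationarity of the random field `ξ`. -/
def Stationary2 {Ω : Type*} [MeasurableSpace Ω] (μ : Measure Ω) (ξ : ℤ × ℤ → Ω → ℝ) : Prop :=
  ∀ w : ℤ × ℤ,
    Measure.map (fun ω (p : ℤ × ℤ) => ξ (p + w) ω) μ = Measure.map (fun ω (p : ℤ × ℤ) => ξ p ω) μ

/-- The vertical shift on `ℝ^{ℤ²}`. -/
def shiftT : (ℤ × ℤ → ℝ) → ℤ × ℤ → ℝ := fun x p => x (p.1 + 1, p.2)

/-- The horizontal shift on `ℝ^{ℤ²}`. -/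
def shiftS : (ℤ × ℤ → ℝ) → ℤ × ℤ → ℝ := fun x p => x (p.1, p.2 + 1)

/-- The discrete Fourier transform `S_n(t) = Σ_{1 ≤ u ≤ n} e^{i u·t} X_u`. -/
def dft2 {Ω : Type*} (X : ℤ × ℤ → Ω → ℂ) (n : ℕ × ℕ) (t : ℝ × ℝ) (ω : Ω) : ℂ :=
  ∑ u ∈ Finset.Icc 1 n.1 ×ˢ Finset.Icc 1 n.2,
    Complex.exp (Complex.I * ((u.1 : ℝ) * t.1 + (u.2 : ℝ) * t.2)) * X ((u.1 : ℤ), (u.2 : ℤ)) ω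

/-- `I = [-π, π)²`. -/
def I2 : Set (ℝ × ℝ) := Set.Ico (-Real.pi) Real.pi ×ˢ Set.Ico (-Real.pi) Real.pi

/-- The projection operator `P_{u,v} X = E_{u,v}X − E_{u,v−1}X − E_{u−1,v}X + E_{u−1,v−1}X`. -/
def P2 {Ω : Type*} [MeasurableSpace Ω] (μ : Measure Ω) (ξ : ℤ × ℤ → Ω → ℝ) (u : ℤ × ℤ)
    (X : Ω → ℂ) : Ω → ℂ :=
  μ[X | F2 ξ u.1 u.2] - μ[X | F2 ξ u.1 (u.2 - 1)] - μ[X | F2 ξ (u.1 - 1) u.2]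
    + μ[X | F2 ξ (u.1 - 1) (u.2 - 1)]

/-- The partial sums `Σ_{j ∈ [−n,n]²} e^{−i j·t} P_{0,0} X_j` defining `D₀(t)`. -/
def Dpart {Ω : Type*} [MeasurableSpace Ω] (μ : Measure Ω) (ξ : ℤ × ℤ → Ω → ℝ)
    (X : ℤ × ℤ → Ω → ℂ) (n : ℕ) (t : ℝ × ℝ) (ω : Ω) : ℂ :=
  ∑ j ∈ Finset.Icc (-(n : ℤ)) (n : ℤ) ×ˢ Finset.Icc (-(n : ℤ)) (n : ℤ),
    Complex.exp (-Complex.I * ((j.1 : ℝ) * t.1 + (j.2 : ℝ) * t.2)) * P2 μ ξ (0, 0) (X j) ω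

lemma F2_le {Ω : Type*} [mΩ : MeasurableSpace Ω] (ξ : ℤ × ℤ → Ω → ℝ)
    (hmeas : ∀ p, Measurable (ξ p)) (k ℓ : ℤ) : F2 ξ k ℓ ≤ mΩ :=
  iSup_le fun p => iSup_le fun _ => (hmeas p).comap_le

lemma integrable_P2 {Ω : Type*} [MeasurableSpace Ω] (μ : Measure Ω) (ξ : ℤ × ℤ → Ω → ℝ)
    (u : ℤ × ℤ) (Y : Ω → ℂ) : Integrable (P2 μ ξ u Y) μ :=
  ((integrable_condExp.sub integrable_condExp).sub integrable_condExp).add integrable_condExp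

lemma condexp_P2_zero {Ω : Type*} [MeasurableSpace Ω] (μ : Measure Ω)
    (ξ : ℤ × ℤ → Ω → ℝ) (hcomm : Commuting2 μ ξ) (Y : Ω → ℂ) :
    μ[P2 μ ξ (0, 0) Y | F2 ξ 0 (-1)] =ᵐ[μ] 0 ∧ μ[P2 μ ξ (0, 0) Y | F2 ξ (-1) 0] =ᵐ[μ] 0 := by
  by_cases hY : Integrable Y μ
  · have hP : P2 μ ξ (0, 0) Y =
        μ[Y | F2 ξ 0 0] - μ[Y | F2 ξ 0 (-1)] - μ[Y | F2 ξ (-1) 0] + μ[Y | F2 ξ (-1) (-1)] := by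
      norm_num [P2]
    have hsplit : ∀ a b : ℤ, μ[P2 μ ξ (0, 0) Y | F2 ξ a b] =ᵐ[μ]
        μ[μ[Y | F2 ξ 0 0] | F2 ξ a b] - μ[μ[Y | F2 ξ 0 (-1)] | F2 ξ a b]
          - μ[μ[Y | F2 ξ (-1) 0] | F2 ξ a b] + μ[μ[Y | F2 ξ (-1) (-1)] | F2 ξ a b] := by
      intro a b
      rw [hP]
      exact (condExp_add ((integrable_condExp.sub integrable_condExp).sub integrable_condExp)
        integrable_condExp _).trans
        (((condExp_sub (integrable_condExp.sub integrable_condExp) integrable_condExp _).trans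
          ((condExp_sub integrable_condExp integrable_condExp _).sub EventuallyEq.rfl)).add
            EventuallyEq.rfl)
    constructor
    · have e1 := hcomm Y hY 0 (-1) 0 0
      have e2 := hcomm Y hY 0 (-1) 0 (-1)
      have e3 := hcomm Y hY 0 (-1) (-1) 0
      have e4 := hcomm Y hY 0 (-1) (-1) (-1)
      norm_num at e1 e2 e3 e4
      calc μ[P2 μ ξ (0, 0) Y | F2 ξ 0 (-1)] =ᵐ[μ] _ := hsplit 0 (-1)
        _ =ᵐ[μ] μ[Y | F2 ξ 0 (-1)] - μ[Y | F2 ξ 0 (-1)]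
            - μ[Y | F2 ξ (-1) (-1)] + μ[Y | F2 ξ (-1) (-1)] := ((e1.sub e2).sub e3).add e4
        _ = 0 := by funext ω; simp only [Pi.add_apply, Pi.sub_apply, Pi.zero_apply]; ring
    · have e1 := hcomm Y hY (-1) 0 0 0
      have e2 := hcomm Y hY (-1) 0 0 (-1)
      have e3 := hcomm Y hY (-1) 0 (-1) 0
      have e4 := hcomm Y hY (-1) 0 (-1) (-1)
      norm_num at e1 e2 e3 e4
      calc μ[P2 μ ξ (0, 0) Y | F2 ξ (-1) 0] =ᵐ[μ] _ := hsplit (-1) 0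
        _ =ᵐ[μ] μ[Y | F2 ξ (-1) 0] - μ[Y | F2 ξ (-1) (-1)]
            - μ[Y | F2 ξ (-1) 0] + μ[Y | F2 ξ (-1) (-1)] := ((e1.sub e2).sub e3).add e4
        _ = 0 := by funext ω; simp only [Pi.add_apply, Pi.sub_apply, Pi.zero_apply]; ring
  · have h0 : P2 μ ξ (0, 0) Y = 0 := by
      simp [P2, condExp_of_not_integrable hY]
    constructor <;> · rw [h0]; rw [condExp_zero]

lemma Dpart_eq_sum {Ω : Type*} [MeasurableSpace Ω] (μ : Measure Ω) (ξ : ℤ × ℤ → Ω → ℝ)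
    (X : ℤ × ℤ → Ω → ℂ) (n : ℕ) (t : ℝ × ℝ) :
    Dpart μ ξ X n t = ∑ j ∈ Finset.Icc (-(n : ℤ)) (n : ℤ) ×ˢ Finset.Icc (-(n : ℤ)) (n : ℤ),
      Complex.exp (-Complex.I * ((j.1 : ℝ) * t.1 + (j.2 : ℝ) * t.2)) • P2 μ ξ (0, 0) (X j) := by
  funext ω
  simp [Dpart, Finset.sum_apply, smul_eq_mul]

lemma integrable_Dpart {Ω : Type*} [MeasurableSpace Ω] (μ : Measure Ω) (ξ : ℤ × ℤ → Ω → ℝ)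
    (X : ℤ × ℤ → Ω → ℂ) (n : ℕ) (t : ℝ × ℝ) : Integrable (Dpart μ ξ X n t) μ := by
  rw [Dpart_eq_sum]
  exact integrable_finset_sum' _ fun j _ => (integrable_P2 μ ξ _ (X j)).smul
    (Complex.exp (-Complex.I * ((j.1 : ℝ) * t.1 + (j.2 : ℝ) * t.2)))

lemma condexp_Dpart_zero {Ω : Type*} [MeasurableSpace Ω] (μ : Measure Ω)
    (ξ : ℤ × ℤ → Ω → ℝ) (X : ℤ × ℤ → Ω → ℂ) (n : ℕ) (t : ℝ × ℝ)
    (a b : ℤ) (hP : ∀ Y : Ω → ℂ, μ[P2 μ ξ (0, 0) Y | F2 ξ a b] =ᵐ[μ] 0) :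
    μ[Dpart μ ξ X n t | F2 ξ a b] =ᵐ[μ] 0 := by
  rw [Dpart_eq_sum]
  calc μ[∑ j ∈ Finset.Icc (-(n : ℤ)) (n : ℤ) ×ˢ Finset.Icc (-(n : ℤ)) (n : ℤ),
        Complex.exp (-Complex.I * ((j.1 : ℝ) * t.1 + (j.2 : ℝ) * t.2)) • P2 μ ξ (0, 0) (X j) | F2 ξ a b]
      =ᵐ[μ] ∑ j ∈ Finset.Icc (-(n : ℤ)) (n : ℤ) ×ˢ Finset.Icc (-(n : ℤ)) (n : ℤ),
        μ[Complex.exp (-Complex.I * ((j.1 : ℝ) * t.1 + (j.2 : ℝ) * t.2)) • P2 μ ξ (0, 0) (X j) | F2 ξ a b] :=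
      condExp_finsetSum (fun j _ => (integrable_P2 μ ξ _ (X j)).smul
        (Complex.exp (-Complex.I * ((j.1 : ℝ) * t.1 + (j.2 : ℝ) * t.2)))) _
    _ =ᵐ[μ] ∑ _j ∈ Finset.Icc (-(n : ℤ)) (n : ℤ) ×ˢ Finset.Icc (-(n : ℤ)) (n : ℤ), (0 : Ω → ℂ) :=
      eventuallyEq_sum fun j _ => (condExp_smul _ _ _).trans (by
        filter_upwards [hP (X j)] with ω hω
        simp only [Pi.smul_apply, hω, Pi.zero_apply, smul_zero])
    _ = 0 := Finset.sum_const_zero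

/-- **`D₀(t)` is a martingale difference in each coordinate**:
`E(D₀(t) | F_{0,−1}) = 0` and `E(D₀(t) | F_{−1,0}) = 0` a.s., for a.e. `t`. -/
theorem D0_martingale_difference
    {Ω : Type*} [MeasurableSpace Ω] (μ : Measure Ω) [IsProbabilityMeasure μ]
    (ξ : ℤ × ℤ → Ω → ℝ) (g : (ℤ × ℤ → ℝ) → ℂ) (X : ℤ × ℤ → Ω → ℂ) (D : ℝ × ℝ → Ω → ℂ)
    (hmeas : ∀ p, Measurable (ξ p)) (hg : Measurable g)
    (hstat : Stationary2 μ ξ)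
    (hXdef : ∀ (k : ℤ × ℤ) (ω : Ω), X k ω = g (fun p => ξ (p + k) ω))
    (hcomm : Commuting2 μ ξ)
    (hreg : Regular2 μ ξ (X 0))
    (hmean : ∫ ω, X 0 ω ∂μ = 0)
    (hL2 : MemLp (X 0) 2 μ)
    (hD : ∀ᵐ t ∂(volume.restrict I2),
      (∀ᵐ ω ∂μ, Tendsto (fun n => Dpart μ ξ X n t ω) atTop (𝓝 (D t ω))) ∧
      Tendsto (fun n => eLpNorm (fun ω => Dpart μ ξ X n t ω - D t ω) 2 μ) atTop (𝓝 0)) :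
    ∀ᵐ t ∂(volume.restrict I2),
      μ[D t | F2 ξ 0 (-1)] =ᵐ[μ] 0 ∧ μ[D t | F2 ξ (-1) 0] =ᵐ[μ] 0 := by
  filter_upwards [hD] with t ht
  obtain ⟨hae, hL2conv⟩ := ht
  have hfm : AEStronglyMeasurable (D t) μ :=
    aestronglyMeasurable_of_tendsto_ae atTop
      (fun n => (integrable_Dpart μ ξ X n t).aestronglyMeasurable) hae
  have hdiffm : ∀ n : ℕ, AEStronglyMeasurable (fun ω => Dpart μ ξ X n t ω - D t ω) μ :=
    fun n => (integrable_Dpart μ ξ X n t).aestronglyMeasurable.sub hfm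
  obtain ⟨n₀, hn₀⟩ : ∃ n : ℕ, eLpNorm (fun ω => Dpart μ ξ X n t ω - D t ω) 2 μ < 1 :=
    (hL2conv.eventually_lt_const (by norm_num)).exists
  have hdiffint : Integrable (fun ω => Dpart μ ξ X n₀ t ω - D t ω) μ :=
    MemLp.integrable one_le_two ⟨hdiffm n₀, lt_of_lt_of_le hn₀ le_top⟩
  have hDint : Integrable (D t) μ := by
    have hDeq : D t = Dpart μ ξ X n₀ t - fun ω => Dpart μ ξ X n₀ t ω - D t ω := by
      funext ω; simp
    rw [hDeq]
    exact (integrable_Dpart μ ξ X n₀ t).sub hdiffint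
  have hlim : Tendsto (fun n => ∫⁻ ω, ‖Dpart μ ξ X n t ω - D t ω‖₊ ∂μ) atTop (𝓝 0) := by
    refine tendsto_of_tendsto_of_tendsto_of_le_of_le tendsto_const_nhds hL2conv
      (fun n => zero_le) (fun n => ?_)
    exact (le_of_eq eLpNorm_one_eq_lintegral_enorm.symm).trans
      (eLpNorm_le_eLpNorm_of_exponent_le one_le_two (hdiffm n))
  have key : ∀ a b : ℤ,
      (∀ n : ℕ, μ[Dpart μ ξ X n t | F2 ξ a b] =ᵐ[μ] 0) → μ[D t | F2 ξ a b] =ᵐ[μ] 0 := by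
    intro a b h0
    have hm : F2 ξ a b ≤ ‹MeasurableSpace Ω› := F2_le ξ hmeas a b
    refine (ae_eq_condExp_of_forall_setIntegral_eq hm hDint (fun s _ _ => integrableOn_zero)
      (fun s hs hμs => ?_) aestronglyMeasurable_zero).symm
    rw [integral_zero]
    have h1 : Tendsto (fun n => ∫ ω in s, Dpart μ ξ X n t ω ∂μ) atTop
        (𝓝 (∫ ω in s, D t ω ∂μ)) := by
      refine tendsto_integral_of_L1 _ hDint.restrict.aestronglyMeasurable
        (Filter.Eventually.of_forall fun n => (integrable_Dpart μ ξ X n t).restrict) ?_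
      refine tendsto_of_tendsto_of_tendsto_of_le_of_le tendsto_const_nhds hlim
        (fun n => zero_le) (fun n => ?_)
      exact lintegral_mono' Measure.restrict_le_self le_rfl
    have h2 : ∀ n : ℕ, ∫ ω in s, Dpart μ ξ X n t ω ∂μ = 0 := by
      intro n
      rw [← setIntegral_condExp hm (integrable_Dpart μ ξ X n t) hs]
      calc ∫ ω in s, (μ[Dpart μ ξ X n t | F2 ξ a b]) ω ∂μ = ∫ ω in s, (0 : Ω → ℂ) ω ∂μ :=
            integral_congr_ae (ae_restrict_of_ae (h0 n))
        _ = 0 := by simp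
    have h3 : Tendsto (fun _ : ℕ => (0 : ℂ)) atTop (𝓝 (∫ ω in s, D t ω ∂μ)) := by
      simpa [h2] using h1
    exact tendsto_nhds_unique tendsto_const_nhds h3
  exact ⟨key 0 (-1) fun n => condexp_Dpart_zero μ ξ X n t 0 (-1)
      fun Y => (condexp_P2_zero μ ξ hcomm Y).1,
    key (-1) 0 fun n => condexp_Dpart_zero μ ξ X n t (-1) 0
      fun Y => (condexp_P2_zero μ ξ hcomm Y).2⟩
end
end
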